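/- For fixed α, β, ξ, κ > 0 with β < ξ and (ξ-β)(2αβ-1) > 0, the determinant of the Jacobian of G at p₃ = (1/(1+αβ), (1-2αβ)/((1+αβ)(β-ξ))) equals ((1-2αβ)²κ)/((1+αβ)(β-ξ)) and is negative, so p₃ is a saddle. -/

import Mathlib

lemma deriv_quad (a b c x : ℝ) : deriv (fun t => a + b * t + c * t ^ 2) x = b + 2 * c * x := by
  have h : HasDerivAt (fun t : ℝ => a + b * t + c * t ^ 2) (b + 2 * c * x) x := by
    have h1 : HasDerivAt (fun t : ℝ => a + b * t) b x := by
      simpa using ((hasDerivAt_id x).const_mul b).const_add a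
    have h2 : HasDerivAt (fun t : ℝ => c * t ^ 2) (c * (2 * x ^ 1)) x :=
      (hasDerivAt_pow 2 x).const_mul c
    have : HasDerivAt (fun t : ℝ => a + b * t + c * t ^ 2) (b + c * (2 * x ^ 1)) x := h1.add h2
    convert this using 1
    ring
  exact h.deriv

/-- The determinant of the Jacobian of G at p₃ equals ((1-2αβ)²κ)/((1+αβ)(β-ξ)) and is
negative, so p₃ is a saddle. -/
theorem stmt3 (α β ξ κ : ℝ) (hα : 0 < α) (hβ : 0 < β) (hξ : 0 < ξ) (hκ : 0 < κ)
    (hβξ : β < ξ) (hsign : (ξ - β) * (2 * α * β - 1) > 0)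
    (G₁ G₂ : ℝ → ℝ → ℝ)
    (hG₁ : ∀ y e : ℝ, G₁ y e = κ * e * (1 - y * (1 + α * β))
      - 2 * y * (-1 + e * (β - ξ) + 3 * α * β * y))
    (hG₂ : ∀ y e : ℝ, G₂ y e = -e * (-1 + e * (β - ξ) + 3 * α * β * y)) :
    let y₃ : ℝ := 1 / (1 + α * β)
    let e₃ : ℝ := (1 - 2 * α * β) / ((1 + α * β) * (β - ξ))
    let J : Matrix (Fin 2) (Fin 2) ℝ :=
      !![deriv (fun y => G₁ y e₃) y₃, deriv (fun e => G₁ y₃ e) e₃;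
         deriv (fun y => G₂ y e₃) y₃, deriv (fun e => G₂ y₃ e) e₃]
    J.det = ((1 - 2 * α * β) ^ 2 * κ) / ((1 + α * β) * (β - ξ)) ∧ J.det < 0 := by
  intro y₃ e₃ J
  have hA : (0:ℝ) < 1 + α * β := by nlinarith
  have hA0 : (1 + α * β) ≠ 0 := ne_of_gt hA
  have hc0 : (β - ξ) ≠ 0 := by intro h; linarith [sub_eq_zero.mp h]
  have f11 : (fun y => G₁ y e₃) = fun y => κ * e₃ +
      (-(κ * e₃ * (1 + α * β)) - 2 * (-1 + e₃ * (β - ξ))) * y + (-(6 * α * β)) * y ^ 2 := by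
    funext y; rw [hG₁]; ring
  have f12 : (fun e => G₁ y₃ e) = fun e => (2 * y₃ - 6 * α * β * y₃ ^ 2) +
      (κ * (1 - y₃ * (1 + α * β)) - 2 * y₃ * (β - ξ)) * e + (0:ℝ) * e ^ 2 := by
    funext e; rw [hG₁]; ring
  have f21 : (fun y => G₂ y e₃) = fun y => (-e₃ * (-1 + e₃ * (β - ξ))) +
      (-e₃ * (3 * α * β)) * y + (0:ℝ) * y ^ 2 := by
    funext y; rw [hG₂]; ring
  have f22 : (fun e => G₂ y₃ e) = fun e => (0:ℝ) +
      (1 - 3 * α * β * y₃) * e + (-(β - ξ)) * e ^ 2 := by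
    funext e; rw [hG₂]; ring
  have hdet : J.det = ((1 - 2 * α * β) ^ 2 * κ) / ((1 + α * β) * (β - ξ)) := by
    show (!![deriv (fun y => G₁ y e₃) y₃, deriv (fun e => G₁ y₃ e) e₃;
         deriv (fun y => G₂ y e₃) y₃, deriv (fun e => G₂ y₃ e) e₃] : Matrix (Fin 2) (Fin 2) ℝ).det
      = ((1 - 2 * α * β) ^ 2 * κ) / ((1 + α * β) * (β - ξ))
    rw [Matrix.det_fin_two_of, f11, f12, f21, f22, deriv_quad, deriv_quad, deriv_quad, deriv_quad]
    show _ = ((1 - 2 * α * β) ^ 2 * κ) / ((1 + α * β) * (β - ξ))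
    simp only [y₃, e₃]
    field_simp
    ring
  refine ⟨hdet, ?_⟩
  rw [hdet]
  have h2 : 2 * α * β - 1 > 0 := by
    rcases mul_pos_iff.mp hsign with ⟨_, h⟩ | ⟨h, _⟩
    · exact h
    · linarith
  have hne : 1 - 2 * α * β ≠ 0 := by intro h; nlinarith
  apply div_neg_of_pos_of_neg
  · exact mul_pos (pow_two_pos_of_ne_zero hne) hκ
  · nlinarith
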